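/- Fix an integer c ≥ 1 and let h = c(c−1)/2. Let X_{+2} ⊂ {±1}^4 be the set of strings with coordinate sum +2 and X_{−2} ⊂ {±1}^4 the set of strings with coordinate sum −2. Let ν_c be the distribution on {±1}^{c²×4} that samples a matrix as follows: with probability 1/2, choose h+c of the c² rows uniformly at random and fill each chosen row with an independent uniformly random element of X_{+2}, filling each of the remaining h rows with an independent uniformly random element of X_{−2}; with probability 1/2, do the same with the roles of X_{+2} and X_{−2} swapped. Then ν_c is pairwise uniform on its 4c² bits: every single entry of the matrix is uniform on {±1}, and every pair of distinct entries has expected product 0. -/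

import Mathlib

open Finset

/-- The ±1 sign encoded by a Boolean (`true ↦ +1`). -/
noncomputable def sgn (b : Bool) : ℝ := if b then 1 else -1

/-- A distribution `μ` on `ι → Bool` is `j`-wise uniform: its marginal on every set of at most
`j` coordinates is uniform. -/
def kwiseUniform {ι : Type} [Fintype ι] [DecidableEq ι] (j : ℕ) (μ : (ι → Bool) → ℝ) : Prop :=
  ∀ A : Finset ι, A.card ≤ j → ∀ a : ι → Bool,
    ∑ x ∈ Finset.univ.filter (fun x : ι → Bool => ∀ i ∈ A, x i = a i), μ x
      = (1 / 2 : ℝ) ^ A.card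

/-- The ±1 sum of a row of the matrix `M`. -/
def rowSum {c : ℕ} (M : Fin (c ^ 2) × Fin 4 → Bool) (l : Fin (c ^ 2)) : ℤ :=
  ∑ i : Fin 4, (if M (l, i) then (1 : ℤ) else -1)

/-- The distribution ν_c on c²×4 ±1 matrices: with probability 1/2, a uniformly random set of
h+c rows (h = c(c-1)/2) is filled with independent uniform strings of sum +2 and the remaining
h rows with independent uniform strings of sum -2; with probability 1/2, the roles of +2 and
-2 are swapped.  This is the induced probability mass function. -/
noncomputable def nuC (c : ℕ) (M : Fin (c ^ 2) × Fin 4 → Bool) : ℝ :=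
  if ∀ l, rowSum M l = 2 ∨ rowSum M l = -2 then
    (if (Finset.univ.filter fun l => rowSum M l = 2).card = c * (c - 1) / 2 + c then
      (1 / 2 : ℝ) * (1 / (((c ^ 2).choose (c * (c - 1) / 2 + c) : ℕ) : ℝ))
        * (1 / 4 : ℝ) ^ (c ^ 2) else 0)
    + (if (Finset.univ.filter fun l => rowSum M l = -2).card = c * (c - 1) / 2 + c then
      (1 / 2 : ℝ) * (1 / (((c ^ 2).choose (c * (c - 1) / 2 + c) : ℕ) : ℝ))
        * (1 / 4 : ℝ) ^ (c ^ 2) else 0)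
  else 0

/-! ### Auxiliary machinery for the proof -/

/-- The ±1 sum of a single row string. -/
def rSum (r : Fin 4 → Bool) : ℤ := ∑ i, (if r i then (1:ℤ) else -1)

lemma sum_pcard_split {α : Type*} [DecidableEq α] (s : Finset α) (x : α) (hx : x ∈ s)
    (n : ℕ) (f : Finset α → ℝ) :
    ∑ S ∈ powersetCard (n+1) s, f S
      = (∑ S ∈ powersetCard n (s.erase x), f (insert x S))
        + ∑ S ∈ powersetCard (n+1) (s.erase x), f S := by
  conv_lhs => rw [← insert_erase hx, powersetCard_succ_insert (notMem_erase x s)]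
  rw [sum_union, sum_image, add_comm]
  · intro S hS T hT hST
    have hxS : x ∉ S := fun h => (notMem_erase x s) ((mem_powersetCard.1 hS).1 h)
    have hxT : x ∉ T := fun h => (notMem_erase x s) ((mem_powersetCard.1 hT).1 h)
    have := congrArg (Finset.erase · x) hST
    simpa [erase_insert hxS, erase_insert hxT] using this
  · rw [disjoint_left]
    intro S hS hS'
    simp only [mem_image] at hS'
    obtain ⟨T, hT, rfl⟩ := hS'
    exact (notMem_erase x s) ((mem_powersetCard.1 hS).1 (mem_insert_self x T))

lemma ind_eq_sum {n : ℕ} (k : ℕ) (t t' : ℤ) (hne : t ≠ t')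
    (hval : ∀ z : ℤ, (z = 2 ∨ z = -2) ↔ (z = t ∨ z = t'))
    (M : Fin n × Fin 4 → Bool) :
    (if (∀ l, rSum (fun i => M (l, i)) = 2 ∨ rSum (fun i => M (l, i)) = -2)
        ∧ (univ.filter (fun l => rSum (fun i => M (l, i)) = t)).card = k then (1:ℝ) else 0)
      = ∑ S ∈ powersetCard k (univ : Finset (Fin n)),
          ∏ l, (if rSum (fun i => M (l, i)) = (if l ∈ S then t else t') then (1:ℝ) else 0) := by
  set T : Finset (Fin n) := univ.filter (fun l => rSum (fun i => M (l, i)) = t) with hT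
  have key : ∀ S ∈ powersetCard k (univ : Finset (Fin n)),
      (∏ l, (if rSum (fun i => M (l, i)) = (if l ∈ S then t else t') then (1:ℝ) else 0))
        = if S = T ∧ (∀ l, rSum (fun i => M (l, i)) = 2 ∨ rSum (fun i => M (l, i)) = -2)
          then 1 else 0 := by
    intro S hS
    by_cases hcond : S = T ∧ (∀ l, rSum (fun i => M (l, i)) = 2 ∨ rSum (fun i => M (l, i)) = -2)
    · rw [if_pos hcond]
      obtain ⟨rfl, hv⟩ := hcond
      apply Finset.prod_eq_one
      intro l _
      by_cases hl : l ∈ T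
      · simp only [hl, if_pos]
        rw [hT, mem_filter] at hl
        simp [hl.2]
      · simp only [hl, if_neg, if_false]
        rw [hT, mem_filter] at hl
        have h1 : rSum (fun i => M (l, i)) ≠ t := fun h => hl ⟨mem_univ l, h⟩
        have h2 := (hval _).1 (hv l)
        rcases h2 with h | h
        · exact absurd h h1
        · simp [h]
    · rw [if_neg hcond]
      rw [not_and_or] at hcond
      rcases hcond with hST | hv
      · have : ∃ l, ¬ (l ∈ S ↔ l ∈ T) := by
          by_contra hcon
          push_neg at hcon
          exact hST (Finset.ext fun l => hcon l)
        obtain ⟨l, hl⟩ := this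
        rw [iff_iff_implies_and_implies, not_and_or] at hl
        apply Finset.prod_eq_zero (mem_univ l)
        rcases hl with hl | hl
        · push_neg at hl
          obtain ⟨hlS, hlT⟩ := hl
          have hnt : rSum (fun i => M (l, i)) ≠ t := fun h => hlT (mem_filter.2 ⟨mem_univ l, h⟩)
          simp [hlS, hnt]
        · push_neg at hl
          obtain ⟨hlT, hlS⟩ := hl
          have ht : rSum (fun i => M (l, i)) = t := (mem_filter.1 hlT).2
          simp [hlS, ht, hne]
      · push_neg at hv
        obtain ⟨l, hl1, hl2⟩ := hv
        have : ¬ (rSum (fun i => M (l, i)) = t ∨ rSum (fun i => M (l, i)) = t') := by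
          rw [← hval]; tauto
        push_neg at this
        apply Finset.prod_eq_zero (mem_univ l)
        by_cases hlS : l ∈ S <;> simp [hlS, this.1, this.2]
  rw [Finset.sum_congr rfl key]
  by_cases hP : ∀ l, rSum (fun i => M (l, i)) = 2 ∨ rSum (fun i => M (l, i)) = -2
  · have e1 : ∀ S : Finset (Fin n),
        (if S = T ∧ (∀ l, rSum (fun i => M (l, i)) = 2 ∨ rSum (fun i => M (l, i)) = -2)
          then (1:ℝ) else 0) = if S = T then 1 else 0 := fun S => by simp [hP]
    rw [Finset.sum_congr rfl (fun S _ => e1 S),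
      Finset.sum_ite_eq' (powersetCard k (univ : Finset (Fin n))) T (fun _ => (1:ℝ))]
    simp [hP, mem_powersetCard]
  · simp [hP]

lemma sum_factorize {n : ℕ} (G : Fin n → (Fin 4 → Bool) → ℝ) :
    ∑ M : Fin n × Fin 4 → Bool, ∏ l, G l (fun i => M (l, i))
      = ∏ l, ∑ r : Fin 4 → Bool, G l r := by
  rw [← Equiv.sum_comp (Equiv.curry (Fin n) (Fin 4) Bool).symm
    (fun M : Fin n × Fin 4 → Bool => ∏ l, G l (fun i => M (l, i)))]
  rw [Finset.prod_univ_sum]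
  rw [← Fintype.piFinset_univ]
  rfl

lemma master {n : ℕ} (k : ℕ) (t t' : ℤ) (hne : t ≠ t')
    (hval : ∀ z : ℤ, (z = 2 ∨ z = -2) ↔ (z = t ∨ z = t'))
    (F : Fin n → (Fin 4 → Bool) → ℝ) :
    ∑ M : Fin n × Fin 4 → Bool,
      (if (∀ l, rSum (fun i => M (l, i)) = 2 ∨ rSum (fun i => M (l, i)) = -2)
        ∧ (univ.filter (fun l => rSum (fun i => M (l, i)) = t)).card = k then (1:ℝ) else 0)
        * ∏ l, F l (fun i => M (l, i))
    = ∑ S ∈ powersetCard k (univ : Finset (Fin n)),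
        ∏ l, ∑ r ∈ univ.filter (fun r => rSum r = (if l ∈ S then t else t')), F l r := by
  have h1 : ∀ M : Fin n × Fin 4 → Bool,
      (if (∀ l, rSum (fun i => M (l, i)) = 2 ∨ rSum (fun i => M (l, i)) = -2)
        ∧ (univ.filter (fun l => rSum (fun i => M (l, i)) = t)).card = k then (1:ℝ) else 0)
        * ∏ l, F l (fun i => M (l, i))
      = ∑ S ∈ powersetCard k (univ : Finset (Fin n)),
          ∏ l, ((if rSum (fun i => M (l, i)) = (if l ∈ S then t else t') then (1:ℝ) else 0)
            * F l (fun i => M (l, i))) := by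
    intro M
    rw [ind_eq_sum k t t' hne hval M, Finset.sum_mul]
    exact Finset.sum_congr rfl fun S _ => (Finset.prod_mul_distrib).symm
  rw [Finset.sum_congr rfl fun M _ => h1 M, Finset.sum_comm]
  apply Finset.sum_congr rfl
  intro S _
  refine (sum_factorize (fun l r =>
    (if rSum r = (if l ∈ S then t else t') then (1:ℝ) else 0) * F l r)).trans ?_
  apply Finset.prod_congr rfl
  intro l _
  rw [Finset.sum_filter]
  exact Finset.sum_congr rfl fun r _ => by rw [ite_mul, one_mul, zero_mul]

lemma nuC_eq (c : ℕ) (M : Fin (c^2) × Fin 4 → Bool) :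
    nuC c M = ((1/2) * (1 / ((Nat.choose (c^2) (c*(c-1)/2 + c) : ℕ) : ℝ)) * (1/4)^(c^2)) *
      ((if (∀ l, rSum (fun i => M (l, i)) = 2 ∨ rSum (fun i => M (l, i)) = -2)
          ∧ (univ.filter (fun l => rSum (fun i => M (l, i)) = 2)).card = c*(c-1)/2 + c
          then (1:ℝ) else 0)
       + (if (∀ l, rSum (fun i => M (l, i)) = 2 ∨ rSum (fun i => M (l, i)) = -2)
          ∧ (univ.filter (fun l => rSum (fun i => M (l, i)) = -2)).card = c*(c-1)/2 + c
          then (1:ℝ) else 0)) := by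
  have hv' : (∀ l, rSum (fun i => M (l, i)) = 2 ∨ rSum (fun i => M (l, i)) = -2)
      ↔ (∀ l, rowSum M l = 2 ∨ rowSum M l = -2) := Iff.rfl
  rw [nuC]
  by_cases hv : ∀ l, rowSum M l = 2 ∨ rowSum M l = -2
  · rw [if_pos hv]
    by_cases h2 : (univ.filter (fun l => rowSum M l = 2)).card = c*(c-1)/2+c <;>
      by_cases h3 : (univ.filter (fun l => rowSum M l = -2)).card = c*(c-1)/2+c
    · rw [if_pos h2, if_pos h3, if_pos (⟨hv'.2 hv, h2⟩ :
        (∀ l, rSum (fun i => M (l, i)) = 2 ∨ rSum (fun i => M (l, i)) = -2)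
          ∧ (univ.filter (fun l => rSum (fun i => M (l, i)) = 2)).card = c*(c-1)/2 + c),
        if_pos (⟨hv'.2 hv, h3⟩ :
        (∀ l, rSum (fun i => M (l, i)) = 2 ∨ rSum (fun i => M (l, i)) = -2)
          ∧ (univ.filter (fun l => rSum (fun i => M (l, i)) = -2)).card = c*(c-1)/2 + c)]
      ring
    · rw [if_pos h2, if_neg h3, if_pos (⟨hv'.2 hv, h2⟩ :
        (∀ l, rSum (fun i => M (l, i)) = 2 ∨ rSum (fun i => M (l, i)) = -2)
          ∧ (univ.filter (fun l => rSum (fun i => M (l, i)) = 2)).card = c*(c-1)/2 + c),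
        if_neg (fun h => h3 h.2)]
      ring
    · rw [if_neg h2, if_pos h3, if_neg (fun h => h2 ((h :
        (∀ l, rSum (fun i => M (l, i)) = 2 ∨ rSum (fun i => M (l, i)) = -2)
          ∧ (univ.filter (fun l => rSum (fun i => M (l, i)) = 2)).card = c*(c-1)/2 + c).2)),
        if_pos (⟨hv'.2 hv, h3⟩ :
        (∀ l, rSum (fun i => M (l, i)) = 2 ∨ rSum (fun i => M (l, i)) = -2)
          ∧ (univ.filter (fun l => rSum (fun i => M (l, i)) = -2)).card = c*(c-1)/2 + c)]
      ring
    · rw [if_neg h2, if_neg h3, if_neg (fun h => h2 ((h :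
        (∀ l, rSum (fun i => M (l, i)) = 2 ∨ rSum (fun i => M (l, i)) = -2)
          ∧ (univ.filter (fun l => rSum (fun i => M (l, i)) = 2)).card = c*(c-1)/2 + c).2)),
        if_neg (fun h => h3 h.2)]
      ring
  · rw [if_neg hv, if_neg (fun h => hv (hv'.1 h.1)), if_neg (fun h => hv (hv'.1 h.1))]
    ring

lemma nu_sum (c : ℕ) (F : Fin (c^2) → (Fin 4 → Bool) → ℝ) :
    ∑ M : Fin (c^2) × Fin 4 → Bool, nuC c M * ∏ l, F l (fun i => M (l, i))
    = ((1/2) * (1 / ((Nat.choose (c^2) (c*(c-1)/2 + c) : ℕ) : ℝ)) * (1/4)^(c^2)) *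
      ((∑ S ∈ powersetCard (c*(c-1)/2 + c) (univ : Finset (Fin (c^2))),
          ∏ l, ∑ r ∈ univ.filter (fun r => rSum r = (if l ∈ S then (2:ℤ) else -2)), F l r)
       + (∑ S ∈ powersetCard (c*(c-1)/2 + c) (univ : Finset (Fin (c^2))),
          ∏ l, ∑ r ∈ univ.filter (fun r => rSum r = (if l ∈ S then (-2:ℤ) else 2)), F l r)) := by
  have h1 : ∀ M : Fin (c^2) × Fin 4 → Bool,
      nuC c M * ∏ l, F l (fun i => M (l, i))
      = ((1/2) * (1 / ((Nat.choose (c^2) (c*(c-1)/2 + c) : ℕ) : ℝ)) * (1/4)^(c^2)) *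
        ((if (∀ l, rSum (fun i => M (l, i)) = 2 ∨ rSum (fun i => M (l, i)) = -2)
            ∧ (univ.filter (fun l => rSum (fun i => M (l, i)) = 2)).card = c*(c-1)/2 + c
            then (1:ℝ) else 0) * ∏ l, F l (fun i => M (l, i))
         + (if (∀ l, rSum (fun i => M (l, i)) = 2 ∨ rSum (fun i => M (l, i)) = -2)
            ∧ (univ.filter (fun l => rSum (fun i => M (l, i)) = -2)).card = c*(c-1)/2 + c
            then (1:ℝ) else 0) * ∏ l, F l (fun i => M (l, i))) := by
    intro M; rw [nuC_eq]; ring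
  rw [Finset.sum_congr rfl fun M _ => h1 M, ← Finset.mul_sum, Finset.sum_add_distrib]
  rw [master (c*(c-1)/2 + c) 2 (-2) (by norm_num) (fun z => Iff.rfl) F]
  rw [master (c*(c-1)/2 + c) (-2) 2 (by norm_num) (fun z => or_comm) F]

lemma branch_zero {n : ℕ} (k : ℕ) (t t' : ℤ)
    (hct : ((univ : Finset (Fin 4 → Bool)).filter (fun r => rSum r = t)).card = 4)
    (hct' : ((univ : Finset (Fin 4 → Bool)).filter (fun r => rSum r = t')).card = 4) :
    ∑ S ∈ powersetCard k (univ : Finset (Fin n)),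
      ∏ l, ∑ r ∈ univ.filter (fun r => rSum r = (if l ∈ S then t else t')), (1:ℝ)
    = (Nat.choose n k : ℝ) * (4:ℝ)^n := by
  have hp : ∀ S : Finset (Fin n),
      (∏ l, ∑ r ∈ univ.filter (fun r => rSum r = (if l ∈ S then t else t')), (1:ℝ))
        = (4:ℝ)^n := by
    intro S
    have : ∀ l : Fin n, (∑ r ∈ univ.filter (fun r => rSum r = (if l ∈ S then t else t')), (1:ℝ))
        = 4 := by
      intro l
      by_cases hlS : l ∈ S <;> simp [hlS, Finset.sum_const, hct, hct']
    rw [Finset.prod_congr rfl (fun l _ => this l), Finset.prod_const, card_univ,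
      Fintype.card_fin]
  rw [Finset.sum_congr rfl (fun S _ => hp S), Finset.sum_const, card_powersetCard, card_univ,
    Fintype.card_fin, nsmul_eq_mul]

lemma branch_one {n : ℕ} (k k' : ℕ) (hkk : k = k'+1) (t t' : ℤ)
    (hct : ((univ : Finset (Fin 4 → Bool)).filter (fun r => rSum r = t)).card = 4)
    (hct' : ((univ : Finset (Fin 4 → Bool)).filter (fun r => rSum r = t')).card = 4)
    (l₀ : Fin n) (G : (Fin 4 → Bool) → ℝ) :
    ∑ S ∈ powersetCard k (univ : Finset (Fin n)),
      ∏ l, ∑ r ∈ univ.filter (fun r => rSum r = (if l ∈ S then t else t')),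
        (if l = l₀ then G r else 1)
    = (4:ℝ)^(n-1) * ((Nat.choose (n-1) k' : ℝ) * (∑ r ∈ univ.filter (fun r => rSum r = t), G r)
        + (Nat.choose (n-1) (k'+1) : ℝ) * (∑ r ∈ univ.filter (fun r => rSum r = t'), G r)) := by
  subst hkk
  have hcard : (univ.erase l₀).card = n - 1 := by
    rw [card_erase_of_mem (mem_univ l₀), card_univ, Fintype.card_fin]
  have hprod : ∀ S : Finset (Fin n),
      (∏ l, ∑ r ∈ univ.filter (fun r => rSum r = (if l ∈ S then t else t')),
        (if l = l₀ then G r else 1))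
      = (∑ r ∈ univ.filter (fun r => rSum r = (if l₀ ∈ S then t else t')), G r) * (4:ℝ)^(n-1) := by
    intro S
    rw [← Finset.mul_prod_erase univ _ (mem_univ l₀)]
    congr 1
    · simp
    · rw [← hcard, ← Finset.prod_const]
      apply Finset.prod_congr rfl
      intro l hl
      have hne := (Finset.mem_erase.1 hl).1
      simp only [hne, if_false]
      by_cases hlS : l ∈ S <;> simp [hlS, Finset.sum_const, hct, hct']
  rw [Finset.sum_congr rfl (fun S _ => hprod S),
    sum_pcard_split univ l₀ (mem_univ l₀) k'
      (fun S => (∑ r ∈ univ.filter (fun r => rSum r = (if l₀ ∈ S then t else t')), G r) * (4:ℝ)^(n-1))]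
  have e1 : ∀ S ∈ powersetCard k' (univ.erase l₀),
      (∑ r ∈ univ.filter (fun r => rSum r = (if l₀ ∈ insert l₀ S then t else t')), G r) * (4:ℝ)^(n-1)
      = (∑ r ∈ univ.filter (fun r => rSum r = t), G r) * (4:ℝ)^(n-1) := by
    intro S _; simp
  have e2 : ∀ S ∈ powersetCard (k'+1) (univ.erase l₀),
      (∑ r ∈ univ.filter (fun r => rSum r = (if l₀ ∈ S then t else t')), G r) * (4:ℝ)^(n-1)
      = (∑ r ∈ univ.filter (fun r => rSum r = t'), G r) * (4:ℝ)^(n-1) := by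
    intro S hS
    have : l₀ ∉ S := fun h => (notMem_erase l₀ univ) ((mem_powersetCard.1 hS).1 h)
    simp [this]
  rw [Finset.sum_congr rfl e1, Finset.sum_congr rfl e2, Finset.sum_const, Finset.sum_const,
    card_powersetCard, card_powersetCard, hcard, nsmul_eq_mul, nsmul_eq_mul]
  ring

lemma branch_two {n : ℕ} (k k'' : ℕ) (hkk : k = k''+2) (t t' : ℤ)
    (hct : ((univ : Finset (Fin 4 → Bool)).filter (fun r => rSum r = t)).card = 4)
    (hct' : ((univ : Finset (Fin 4 → Bool)).filter (fun r => rSum r = t')).card = 4)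
    (l₀ l₁ : Fin n) (hne01 : l₀ ≠ l₁) (G₀ G₁ : (Fin 4 → Bool) → ℝ) :
    ∑ S ∈ powersetCard k (univ : Finset (Fin n)),
      ∏ l, ∑ r ∈ univ.filter (fun r => rSum r = (if l ∈ S then t else t')),
        (if l = l₀ then G₀ r else if l = l₁ then G₁ r else 1)
    = (4:ℝ)^(n-2) *
        ((Nat.choose (n-2) k'' : ℝ) * ((∑ r ∈ univ.filter (fun r => rSum r = t), G₀ r)
            * (∑ r ∈ univ.filter (fun r => rSum r = t), G₁ r))
        + (Nat.choose (n-2) (k''+1) : ℝ) * ((∑ r ∈ univ.filter (fun r => rSum r = t), G₀ r)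
            * (∑ r ∈ univ.filter (fun r => rSum r = t'), G₁ r)
          + (∑ r ∈ univ.filter (fun r => rSum r = t'), G₀ r)
            * (∑ r ∈ univ.filter (fun r => rSum r = t), G₁ r))
        + (Nat.choose (n-2) (k''+2) : ℝ) * ((∑ r ∈ univ.filter (fun r => rSum r = t'), G₀ r)
            * (∑ r ∈ univ.filter (fun r => rSum r = t'), G₁ r))) := by
  subst hkk
  have hl₁mem : l₁ ∈ univ.erase l₀ := mem_erase.2 ⟨hne01.symm, mem_univ l₁⟩
  have hcard : ((univ.erase l₀).erase l₁).card = n - 2 := by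
    rw [card_erase_of_mem hl₁mem, card_erase_of_mem (mem_univ l₀), card_univ, Fintype.card_fin]
    omega
  set g : ℤ → ℝ := fun s => ∑ r ∈ univ.filter (fun r => rSum r = s), G₀ r with hg
  set g' : ℤ → ℝ := fun s => ∑ r ∈ univ.filter (fun r => rSum r = s), G₁ r with hg'
  have hprod : ∀ S : Finset (Fin n),
      (∏ l, ∑ r ∈ univ.filter (fun r => rSum r = (if l ∈ S then t else t')),
        (if l = l₀ then G₀ r else if l = l₁ then G₁ r else 1))
      = g (if l₀ ∈ S then t else t') * (g' (if l₁ ∈ S then t else t') * (4:ℝ)^(n-2)) := by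
    intro S
    rw [← Finset.mul_prod_erase univ _ (mem_univ l₀), ← Finset.mul_prod_erase _ _ hl₁mem]
    congr 1
    · simp [hg]
    congr 1
    · have : ∀ r : Fin 4 → Bool, (if l₁ = l₀ then G₀ r else if l₁ = l₁ then G₁ r else 1) = G₁ r := by
        intro r; simp [hne01.symm]
      rw [Finset.sum_congr rfl (fun r _ => this r)]
    · rw [← hcard, ← Finset.prod_const]
      apply Finset.prod_congr rfl
      intro l hl
      have hne1 := (Finset.mem_erase.1 hl).1
      have hne0 := (Finset.mem_erase.1 (Finset.mem_erase.1 hl).2).1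
      simp only [hne0, hne1, if_false]
      by_cases hlS : l ∈ S <;> simp [hlS, Finset.sum_const, hct, hct']
  rw [Finset.sum_congr rfl (fun S _ => hprod S)]
  rw [sum_pcard_split univ l₀ (mem_univ l₀) (k''+1)
      (fun S => g (if l₀ ∈ S then t else t') * (g' (if l₁ ∈ S then t else t') * (4:ℝ)^(n-2)))]
  rw [sum_pcard_split (univ.erase l₀) l₁ hl₁mem k''
      (fun S => g (if l₀ ∈ insert l₀ S then t else t') * (g' (if l₁ ∈ insert l₀ S then t else t') * (4:ℝ)^(n-2)))]
  rw [sum_pcard_split (univ.erase l₀) l₁ hl₁mem (k''+1)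
      (fun S => g (if l₀ ∈ S then t else t') * (g' (if l₁ ∈ S then t else t') * (4:ℝ)^(n-2)))]
  have hnotmem : ∀ m, ∀ S ∈ powersetCard m ((univ.erase l₀).erase l₁),
      l₀ ∉ S ∧ l₁ ∉ S := by
    intro m S hS
    have hsub := (mem_powersetCard.1 hS).1
    constructor
    · intro h
      exact (notMem_erase l₀ univ) (Finset.mem_of_mem_erase (hsub h))
    · intro h
      exact (notMem_erase l₁ _) (hsub h)
  have e1 : ∀ S ∈ powersetCard k'' ((univ.erase l₀).erase l₁),
      g (if l₀ ∈ insert l₀ (insert l₁ S) then t else t')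
        * (g' (if l₁ ∈ insert l₀ (insert l₁ S) then t else t') * (4:ℝ)^(n-2))
      = g t * (g' t * (4:ℝ)^(n-2)) := by
    intro S hS; simp
  have e2 : ∀ S ∈ powersetCard (k''+1) ((univ.erase l₀).erase l₁),
      g (if l₀ ∈ insert l₀ S then t else t') * (g' (if l₁ ∈ insert l₀ S then t else t') * (4:ℝ)^(n-2))
      = g t * (g' t' * (4:ℝ)^(n-2)) := by
    intro S hS
    obtain ⟨h0, h1⟩ := hnotmem _ S hS
    have : l₁ ∉ insert l₀ S := by simp [hne01.symm, h1]
    simp [this]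
  have e3 : ∀ S ∈ powersetCard (k''+1) ((univ.erase l₀).erase l₁),
      g (if l₀ ∈ insert l₁ S then t else t') * (g' (if l₁ ∈ insert l₁ S then t else t') * (4:ℝ)^(n-2))
      = g t' * (g' t * (4:ℝ)^(n-2)) := by
    intro S hS
    obtain ⟨h0, h1⟩ := hnotmem _ S hS
    have : l₀ ∉ insert l₁ S := by simp [hne01, h0]
    simp [this]
  have e4 : ∀ S ∈ powersetCard (k''+2) ((univ.erase l₀).erase l₁),
      g (if l₀ ∈ S then t else t') * (g' (if l₁ ∈ S then t else t') * (4:ℝ)^(n-2))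
      = g t' * (g' t' * (4:ℝ)^(n-2)) := by
    intro S hS
    obtain ⟨h0, h1⟩ := hnotmem _ S hS
    simp [h0, h1]
  rw [Finset.sum_congr rfl e1, Finset.sum_congr rfl e2, Finset.sum_congr rfl e3,
    Finset.sum_congr rfl e4]
  simp only [Finset.sum_const, card_powersetCard, hcard, nsmul_eq_mul]
  ring

lemma pascal1' (N k m k' : ℕ) (hm : N = m+1) (hk : k = k'+1) :
    Nat.choose N k = Nat.choose m k' + Nat.choose m (k'+1) := by
  subst hm; subst hk; exact Nat.choose_succ_succ _ _

lemma pascal1'' (N k m k'' : ℕ) (hm : N = m+2) (hk : k = k''+2) :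
    Nat.choose N k = Nat.choose m k'' + 2 * Nat.choose m (k''+1) + Nat.choose m (k''+2) := by
  subst hm; subst hk
  rw [show m+2 = (m+1)+1 from rfl, show k''+2 = (k''+1)+1 from rfl,
    Nat.choose_succ_succ (m+1) (k''+1), Nat.choose_succ_succ m k'', Nat.choose_succ_succ m (k''+1)]
  ring

lemma pascal2 (d h : ℕ) (hh : 2*h = (d+2)*(d+1)) :
    Nat.choose (2*h+d) (h+d) + Nat.choose (2*h+d) (h+d+2)
      = 2 * Nat.choose (2*h+d) (h+d+1) := by
  have hpos : 1 ≤ h := by nlinarith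
  obtain ⟨h', rfl⟩ : ∃ h', h = h'+1 := ⟨h-1, by omega⟩
  have r1 := Nat.choose_succ_right_eq (2*(h'+1)+d) (h'+1+d)
  have r2 := Nat.choose_succ_right_eq (2*(h'+1)+d) (h'+1+d+1)
  have s1 : 2*(h'+1)+d - (h'+1+d) = h'+1 := by omega
  have s2 : 2*(h'+1)+d - (h'+1+d+1) = h' := by omega
  rw [s1] at r1
  rw [s2] at r2
  have key : (Nat.choose (2*(h'+1)+d) (h'+1+d) + Nat.choose (2*(h'+1)+d) (h'+1+d+2))
        * ((h'+1)*(h'+d+3))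
      = (2 * Nat.choose (2*(h'+1)+d) (h'+1+d+1)) * ((h'+1)*(h'+d+3)) := by
    zify at r1 r2 hh ⊢
    nlinarith [r1, r2, hh]
  exact Nat.eq_of_mul_eq_mul_right (by positivity) key

lemma two_mul_div (c : ℕ) : 2*(c*(c-1)/2) = c*(c-1) := by
  rcases c with _ | c'
  · simp
  · have he : 2 ∣ (c'+1)*c' := by
      have h := (Nat.even_mul_succ_self c').two_dvd
      rwa [Nat.mul_comm] at h
    simp only [Nat.add_sub_cancel]
    exact Nat.mul_div_cancel' he

lemma hsplit (c : ℕ) (hc : 1 ≤ c) : c^2 = 2*(c*(c-1)/2) + c := by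
  rw [two_mul_div]
  obtain ⟨c', rfl⟩ : ∃ c', c = c'+1 := ⟨c-1, by omega⟩
  simp only [Nat.add_sub_cancel]
  ring

lemma final_calc0 (N : ℕ) (CN : ℝ) (hpos : 0 < CN) :
    (1/2) * (1/CN) * ((1:ℝ)/4)^N * ((CN * (4:ℝ)^N) + (CN * (4:ℝ)^N)) = 1 := by
  have h1 : ((1:ℝ)/4)^N * 4^N = 1 := by rw [← mul_pow]; norm_num
  have hne : CN ≠ 0 := ne_of_gt hpos
  field_simp
  nlinarith [h1]

lemma final_calc (N m k' : ℕ) (hm : N = m+1) (u v CN : ℝ)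
    (hCN : CN = (Nat.choose m k' : ℝ) + (Nat.choose m (k'+1) : ℝ)) (hpos : 0 < CN) :
    (1/2) * (1/CN) * ((1:ℝ)/4)^N *
      ((4:ℝ)^m * ((Nat.choose m k' : ℝ)*u + (Nat.choose m (k'+1):ℝ)*v)
        + (4:ℝ)^m * ((Nat.choose m k':ℝ)*v + (Nat.choose m (k'+1):ℝ)*u))
    = (u+v)/8 := by
  subst hm
  have h1 : ((1:ℝ)/4)^m * 4^m = 1 := by rw [← mul_pow]; norm_num
  have hne : CN ≠ 0 := ne_of_gt hpos
  have h4 : ((4:ℝ)^m) ≠ 0 := by positivity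
  rw [pow_succ, hCN]
  rw [hCN] at hne
  field_simp
  rw [h1]; ring

lemma final_calc2 (N m : ℕ) (hm : N = m+2) (u₀ v₀ u₁ v₁ A B D CN : ℝ)
    (hCN : CN = A + 2*B + D) (hAD : A + D = 2*B) (hpos : 0 < CN)
    (hu₀ : u₀ + v₀ = 4) (hu₁ : u₁ + v₁ = 4) :
    (1/2) * (1/CN) * ((1:ℝ)/4)^N *
      ((4:ℝ)^m * (A*(u₀*u₁) + B*(u₀*v₁ + v₀*u₁) + D*(v₀*v₁))
       + (4:ℝ)^m * (A*(v₀*v₁) + B*(v₀*u₁ + u₀*v₁) + D*(u₀*u₁))) = 1/4 := by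
  subst hm
  have key : (A*(u₀*u₁) + B*(u₀*v₁ + v₀*u₁) + D*(v₀*v₁))
      + (A*(v₀*v₁) + B*(v₀*u₁ + u₀*v₁) + D*(u₀*u₁)) = 8*CN := by
    linear_combination (u₀*u₁+v₀*v₁-8)*hAD + 2*B*(u₁+v₁)*hu₀ + 8*B*hu₁ - 8*hCN
  have h1 : ((1:ℝ)/4)^m * 4^m = 1 := by rw [← mul_pow]; norm_num
  have hne : CN ≠ 0 := ne_of_gt hpos
  calc (1/2) * (1/CN) * ((1:ℝ)/4)^(m+2) *
      ((4:ℝ)^m * (A*(u₀*u₁) + B*(u₀*v₁ + v₀*u₁) + D*(v₀*v₁))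
       + (4:ℝ)^m * (A*(v₀*v₁) + B*(v₀*u₁ + u₀*v₁) + D*(u₀*u₁)))
      = (1/2) * (1/CN) * (((1:ℝ)/4)^(m+2) * (4:ℝ)^m) *
        ((A*(u₀*u₁) + B*(u₀*v₁ + v₀*u₁) + D*(v₀*v₁))
         + (A*(v₀*v₁) + B*(v₀*u₁ + u₀*v₁) + D*(u₀*u₁))) := by ring
    _ = (1/2) * (1/CN) * (((1:ℝ)/4)^(m+2) * (4:ℝ)^m) * (8*CN) := by rw [key]
    _ = 1/4 := by
        rw [pow_succ, pow_succ]
        field_simp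
        nlinarith [h1]

lemma arith_facts (c : ℕ) (hc : 1 ≤ c) :
    (c*(c-1)/2 + c ≤ c^2) ∧ (c^2 = (c^2 - 1) + 1)
      ∧ (c*(c-1)/2 + c = (c*(c-1)/2 + (c-1)) + 1) := by
  have hsq := hsplit c hc
  obtain ⟨H, hH⟩ : ∃ H, H = c*(c-1)/2 := ⟨_, rfl⟩
  obtain ⟨N, hN⟩ : ∃ N, N = c^2 := ⟨_, rfl⟩
  rw [← hH, ← hN] at hsq ⊢
  omega

lemma arith_facts2 (c : ℕ) (hc : 2 ≤ c) :
    (c^2 = (c^2 - 2) + 2) ∧ (c*(c-1)/2 + c = (c*(c-1)/2 + (c-2)) + 2)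
      ∧ (c^2 - 2 = 2*(c*(c-1)/2) + (c-2)) := by
  have hsq := hsplit c (by omega)
  obtain ⟨H, hH⟩ : ∃ H, H = c*(c-1)/2 := ⟨_, rfl⟩
  obtain ⟨N, hN⟩ : ∃ N, N = c^2 := ⟨_, rfl⟩
  rw [← hH, ← hN] at hsq ⊢
  omega

lemma count_all2 : ((univ : Finset (Fin 4 → Bool)).filter (fun r => rSum r = 2)).card = 4 := by
  decide

lemma count_allm2 : ((univ : Finset (Fin 4 → Bool)).filter (fun r => rSum r = -2)).card = 4 := by
  decide

lemma count_one (i : Fin 4) (b : Bool) :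
    ((univ : Finset (Fin 4 → Bool)).filter (fun r => rSum r = 2 ∧ r i = b)).card
      + ((univ : Finset (Fin 4 → Bool)).filter (fun r => rSum r = -2 ∧ r i = b)).card = 4 := by
  revert i b; decide

lemma count_two (i j : Fin 4) (hij : i ≠ j) (b b' : Bool) :
    ((univ : Finset (Fin 4 → Bool)).filter (fun r => rSum r = 2 ∧ (r i = b ∧ r j = b'))).card
      + ((univ : Finset (Fin 4 → Bool)).filter (fun r => rSum r = -2 ∧ (r i = b ∧ r j = b'))).card
      = 2 := by
  revert i j b b'; decide

lemma choose_pos_real (c : ℕ) (hc : 1 ≤ c) :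
    (0:ℝ) < ((Nat.choose (c^2) (c*(c-1)/2 + c) : ℕ) : ℝ) := by
  have := (arith_facts c hc).1
  exact_mod_cast Nat.choose_pos this

lemma L0 (c : ℕ) (hc : 1 ≤ c) : ∑ M : Fin (c^2) × Fin 4 → Bool, nuC c M = 1 := by
  have hpos := choose_pos_real c hc
  calc ∑ M : Fin (c^2) × Fin 4 → Bool, nuC c M
      = ∑ M : Fin (c^2) × Fin 4 → Bool, nuC c M * ∏ _l : Fin (c^2), (1:ℝ) := by simp
    _ = ((1/2) * (1 / ((Nat.choose (c^2) (c*(c-1)/2 + c) : ℕ) : ℝ)) * (1/4)^(c^2)) *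
        ((∑ S ∈ powersetCard (c*(c-1)/2 + c) (univ : Finset (Fin (c^2))),
            ∏ l, ∑ r ∈ univ.filter (fun r => rSum r = (if l ∈ S then (2:ℤ) else -2)), (1:ℝ))
         + (∑ S ∈ powersetCard (c*(c-1)/2 + c) (univ : Finset (Fin (c^2))),
            ∏ l, ∑ r ∈ univ.filter (fun r => rSum r = (if l ∈ S then (-2:ℤ) else 2)), (1:ℝ))) :=
        nu_sum c (fun _ _ => (1:ℝ))
    _ = ((1/2) * (1 / ((Nat.choose (c^2) (c*(c-1)/2 + c) : ℕ) : ℝ)) * (1/4)^(c^2)) *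
        (((Nat.choose (c^2) (c*(c-1)/2 + c) : ℝ) * (4:ℝ)^(c^2))
          + ((Nat.choose (c^2) (c*(c-1)/2 + c) : ℝ) * (4:ℝ)^(c^2))) := by
        rw [branch_zero (c*(c-1)/2 + c) 2 (-2) count_all2 count_allm2,
          branch_zero (c*(c-1)/2 + c) (-2) 2 count_allm2 count_all2]
    _ = 1 := final_calc0 (c^2) _ hpos

lemma L1 (c : ℕ) (hc : 1 ≤ c) (l₀ : Fin (c^2)) (i₀ : Fin 4) (b : Bool) :
    ∑ M ∈ univ.filter (fun M : Fin (c^2) × Fin 4 → Bool => M (l₀, i₀) = b), nuC c M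
      = 1/2 := by
  have hpos := choose_pos_real c hc
  obtain ⟨hle, hm, hk⟩ := arith_facts c hc
  have step1 : ∑ M ∈ univ.filter (fun M : Fin (c^2) × Fin 4 → Bool => M (l₀, i₀) = b), nuC c M
      = ∑ M : Fin (c^2) × Fin 4 → Bool,
          nuC c M * ∏ l, (if l = l₀ then (if M (l, i₀) = b then (1:ℝ) else 0) else 1) := by
    rw [Finset.sum_filter]
    apply Finset.sum_congr rfl
    intro M _
    have hp : (∏ l, (if l = l₀ then (if M (l, i₀) = b then (1:ℝ) else 0) else 1))
        = if M (l₀, i₀) = b then 1 else 0 := by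
      rw [Finset.prod_eq_single l₀ (fun l _ hl => by simp [hl])
        (fun h => absurd (mem_univ l₀) h)]
      simp
    rw [hp]
    by_cases h : M (l₀, i₀) = b <;> simp [h]
  have hu : (∑ r ∈ univ.filter (fun r => rSum r = (2:ℤ)), (if r i₀ = b then (1:ℝ) else 0))
      = ((univ.filter (fun r => rSum r = (2:ℤ) ∧ r i₀ = b)).card : ℝ) := by
    rw [Finset.sum_boole, Finset.filter_filter]
  have hv : (∑ r ∈ univ.filter (fun r => rSum r = (-2:ℤ)), (if r i₀ = b then (1:ℝ) else 0))
      = ((univ.filter (fun r => rSum r = (-2:ℤ) ∧ r i₀ = b)).card : ℝ) := by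
    rw [Finset.sum_boole, Finset.filter_filter]
  have huv : (∑ r ∈ univ.filter (fun r => rSum r = (2:ℤ)), (if r i₀ = b then (1:ℝ) else 0))
      + (∑ r ∈ univ.filter (fun r => rSum r = (-2:ℤ)), (if r i₀ = b then (1:ℝ) else 0)) = 4 := by
    rw [hu, hv]
    exact_mod_cast count_one i₀ b
  have hCN : ((Nat.choose (c^2) (c*(c-1)/2 + c) : ℕ) : ℝ)
      = (Nat.choose (c^2-1) (c*(c-1)/2 + (c-1)) : ℝ)
        + (Nat.choose (c^2-1) ((c*(c-1)/2 + (c-1))+1) : ℝ) := by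
    exact_mod_cast congrArg (Nat.cast (R := ℝ))
      (pascal1' (c^2) (c*(c-1)/2 + c) (c^2-1) (c*(c-1)/2 + (c-1)) hm hk)
  calc ∑ M ∈ univ.filter (fun M : Fin (c^2) × Fin 4 → Bool => M (l₀, i₀) = b), nuC c M
      = ∑ M : Fin (c^2) × Fin 4 → Bool,
          nuC c M * ∏ l, (if l = l₀ then (if M (l, i₀) = b then (1:ℝ) else 0) else 1) := step1
    _ = ((1/2) * (1 / ((Nat.choose (c^2) (c*(c-1)/2 + c) : ℕ) : ℝ)) * (1/4)^(c^2)) *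
        ((∑ S ∈ powersetCard (c*(c-1)/2 + c) (univ : Finset (Fin (c^2))),
            ∏ l, ∑ r ∈ univ.filter (fun r => rSum r = (if l ∈ S then (2:ℤ) else -2)),
              (if l = l₀ then (if r i₀ = b then (1:ℝ) else 0) else 1))
         + (∑ S ∈ powersetCard (c*(c-1)/2 + c) (univ : Finset (Fin (c^2))),
            ∏ l, ∑ r ∈ univ.filter (fun r => rSum r = (if l ∈ S then (-2:ℤ) else 2)),
              (if l = l₀ then (if r i₀ = b then (1:ℝ) else 0) else 1))) :=
        nu_sum c (fun l r => if l = l₀ then (if r i₀ = b then (1:ℝ) else 0) else 1)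
    _ = ((1/2) * (1 / ((Nat.choose (c^2) (c*(c-1)/2 + c) : ℕ) : ℝ)) * (1/4)^(c^2)) *
        ((4:ℝ)^(c^2-1) * ((Nat.choose (c^2-1) (c*(c-1)/2 + (c-1)) : ℝ)
              * (∑ r ∈ univ.filter (fun r => rSum r = (2:ℤ)), (if r i₀ = b then (1:ℝ) else 0))
            + (Nat.choose (c^2-1) ((c*(c-1)/2 + (c-1))+1) : ℝ)
              * (∑ r ∈ univ.filter (fun r => rSum r = (-2:ℤ)), (if r i₀ = b then (1:ℝ) else 0)))
         + (4:ℝ)^(c^2-1) * ((Nat.choose (c^2-1) (c*(c-1)/2 + (c-1)) : ℝ)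
              * (∑ r ∈ univ.filter (fun r => rSum r = (-2:ℤ)), (if r i₀ = b then (1:ℝ) else 0))
            + (Nat.choose (c^2-1) ((c*(c-1)/2 + (c-1))+1) : ℝ)
              * (∑ r ∈ univ.filter (fun r => rSum r = (2:ℤ)), (if r i₀ = b then (1:ℝ) else 0)))) := by
        rw [branch_one (c*(c-1)/2 + c) (c*(c-1)/2 + (c-1)) hk 2 (-2) count_all2 count_allm2 l₀
            (fun r => if r i₀ = b then (1:ℝ) else 0),
          branch_one (c*(c-1)/2 + c) (c*(c-1)/2 + (c-1)) hk (-2) 2 count_allm2 count_all2 l₀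
            (fun r => if r i₀ = b then (1:ℝ) else 0)]
    _ = ((∑ r ∈ univ.filter (fun r => rSum r = (2:ℤ)), (if r i₀ = b then (1:ℝ) else 0))
          + (∑ r ∈ univ.filter (fun r => rSum r = (-2:ℤ)), (if r i₀ = b then (1:ℝ) else 0)))/8 :=
        final_calc (c^2) (c^2-1) (c*(c-1)/2 + (c-1)) hm _ _ _ hCN hpos
    _ = 1/2 := by rw [huv]; norm_num

lemma L2same (c : ℕ) (hc : 1 ≤ c) (l₀ : Fin (c^2)) (i₀ i₁ : Fin 4) (hii : i₀ ≠ i₁)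
    (b b' : Bool) :
    ∑ M ∈ univ.filter (fun M : Fin (c^2) × Fin 4 → Bool =>
        M (l₀, i₀) = b ∧ M (l₀, i₁) = b'), nuC c M = 1/4 := by
  have hpos := choose_pos_real c hc
  obtain ⟨hle, hm, hk⟩ := arith_facts c hc
  have step1 : ∑ M ∈ univ.filter (fun M : Fin (c^2) × Fin 4 → Bool =>
        M (l₀, i₀) = b ∧ M (l₀, i₁) = b'), nuC c M
      = ∑ M : Fin (c^2) × Fin 4 → Bool,
          nuC c M * ∏ l, (if l = l₀ then
            (if M (l, i₀) = b ∧ M (l, i₁) = b' then (1:ℝ) else 0) else 1) := by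
    rw [Finset.sum_filter]
    apply Finset.sum_congr rfl
    intro M _
    have hp : (∏ l, (if l = l₀ then
          (if M (l, i₀) = b ∧ M (l, i₁) = b' then (1:ℝ) else 0) else 1))
        = if M (l₀, i₀) = b ∧ M (l₀, i₁) = b' then 1 else 0 := by
      rw [Finset.prod_eq_single l₀ (fun l _ hl => by simp [hl])
        (fun h => absurd (mem_univ l₀) h)]
      simp
    rw [hp]
    by_cases h : M (l₀, i₀) = b ∧ M (l₀, i₁) = b' <;> simp [h]
  have hu : (∑ r ∈ univ.filter (fun r => rSum r = (2:ℤ)),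
        (if r i₀ = b ∧ r i₁ = b' then (1:ℝ) else 0))
      = ((univ.filter (fun r => rSum r = (2:ℤ) ∧ (r i₀ = b ∧ r i₁ = b'))).card : ℝ) := by
    rw [Finset.sum_boole, Finset.filter_filter]
  have hv : (∑ r ∈ univ.filter (fun r => rSum r = (-2:ℤ)),
        (if r i₀ = b ∧ r i₁ = b' then (1:ℝ) else 0))
      = ((univ.filter (fun r => rSum r = (-2:ℤ) ∧ (r i₀ = b ∧ r i₁ = b'))).card : ℝ) := by
    rw [Finset.sum_boole, Finset.filter_filter]
  have huv : (∑ r ∈ univ.filter (fun r => rSum r = (2:ℤ)),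
        (if r i₀ = b ∧ r i₁ = b' then (1:ℝ) else 0))
      + (∑ r ∈ univ.filter (fun r => rSum r = (-2:ℤ)),
        (if r i₀ = b ∧ r i₁ = b' then (1:ℝ) else 0)) = 2 := by
    rw [hu, hv]
    exact_mod_cast count_two i₀ i₁ hii b b'
  have hCN : ((Nat.choose (c^2) (c*(c-1)/2 + c) : ℕ) : ℝ)
      = (Nat.choose (c^2-1) (c*(c-1)/2 + (c-1)) : ℝ)
        + (Nat.choose (c^2-1) ((c*(c-1)/2 + (c-1))+1) : ℝ) := by
    exact_mod_cast congrArg (Nat.cast (R := ℝ))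
      (pascal1' (c^2) (c*(c-1)/2 + c) (c^2-1) (c*(c-1)/2 + (c-1)) hm hk)
  calc ∑ M ∈ univ.filter (fun M : Fin (c^2) × Fin 4 → Bool =>
        M (l₀, i₀) = b ∧ M (l₀, i₁) = b'), nuC c M
      = ∑ M : Fin (c^2) × Fin 4 → Bool,
          nuC c M * ∏ l, (if l = l₀ then
            (if M (l, i₀) = b ∧ M (l, i₁) = b' then (1:ℝ) else 0) else 1) := step1
    _ = ((1/2) * (1 / ((Nat.choose (c^2) (c*(c-1)/2 + c) : ℕ) : ℝ)) * (1/4)^(c^2)) *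
        ((∑ S ∈ powersetCard (c*(c-1)/2 + c) (univ : Finset (Fin (c^2))),
            ∏ l, ∑ r ∈ univ.filter (fun r => rSum r = (if l ∈ S then (2:ℤ) else -2)),
              (if l = l₀ then (if r i₀ = b ∧ r i₁ = b' then (1:ℝ) else 0) else 1))
         + (∑ S ∈ powersetCard (c*(c-1)/2 + c) (univ : Finset (Fin (c^2))),
            ∏ l, ∑ r ∈ univ.filter (fun r => rSum r = (if l ∈ S then (-2:ℤ) else 2)),
              (if l = l₀ then (if r i₀ = b ∧ r i₁ = b' then (1:ℝ) else 0) else 1))) :=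
        nu_sum c (fun l r => if l = l₀ then
          (if r i₀ = b ∧ r i₁ = b' then (1:ℝ) else 0) else 1)
    _ = ((1/2) * (1 / ((Nat.choose (c^2) (c*(c-1)/2 + c) : ℕ) : ℝ)) * (1/4)^(c^2)) *
        ((4:ℝ)^(c^2-1) * ((Nat.choose (c^2-1) (c*(c-1)/2 + (c-1)) : ℝ)
              * (∑ r ∈ univ.filter (fun r => rSum r = (2:ℤ)),
                  (if r i₀ = b ∧ r i₁ = b' then (1:ℝ) else 0))
            + (Nat.choose (c^2-1) ((c*(c-1)/2 + (c-1))+1) : ℝ)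
              * (∑ r ∈ univ.filter (fun r => rSum r = (-2:ℤ)),
                  (if r i₀ = b ∧ r i₁ = b' then (1:ℝ) else 0)))
         + (4:ℝ)^(c^2-1) * ((Nat.choose (c^2-1) (c*(c-1)/2 + (c-1)) : ℝ)
              * (∑ r ∈ univ.filter (fun r => rSum r = (-2:ℤ)),
                  (if r i₀ = b ∧ r i₁ = b' then (1:ℝ) else 0))
            + (Nat.choose (c^2-1) ((c*(c-1)/2 + (c-1))+1) : ℝ)
              * (∑ r ∈ univ.filter (fun r => rSum r = (2:ℤ)),
                  (if r i₀ = b ∧ r i₁ = b' then (1:ℝ) else 0)))) := by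
        rw [branch_one (c*(c-1)/2 + c) (c*(c-1)/2 + (c-1)) hk 2 (-2) count_all2 count_allm2 l₀
            (fun r => if r i₀ = b ∧ r i₁ = b' then (1:ℝ) else 0),
          branch_one (c*(c-1)/2 + c) (c*(c-1)/2 + (c-1)) hk (-2) 2 count_allm2 count_all2 l₀
            (fun r => if r i₀ = b ∧ r i₁ = b' then (1:ℝ) else 0)]
    _ = ((∑ r ∈ univ.filter (fun r => rSum r = (2:ℤ)),
            (if r i₀ = b ∧ r i₁ = b' then (1:ℝ) else 0))
          + (∑ r ∈ univ.filter (fun r => rSum r = (-2:ℤ)),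
            (if r i₀ = b ∧ r i₁ = b' then (1:ℝ) else 0)))/8 :=
        final_calc (c^2) (c^2-1) (c*(c-1)/2 + (c-1)) hm _ _ _ hCN hpos
    _ = 1/4 := by rw [huv]; norm_num

lemma L2diff (c : ℕ) (hc : 1 ≤ c) (l₀ l₁ : Fin (c^2)) (hll : l₀ ≠ l₁) (i₀ i₁ : Fin 4)
    (b b' : Bool) :
    ∑ M ∈ univ.filter (fun M : Fin (c^2) × Fin 4 → Bool =>
        M (l₀, i₀) = b ∧ M (l₁, i₁) = b'), nuC c M = 1/4 := by
  have hpos := choose_pos_real c hc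
  have hc2 : 2 ≤ c := by
    by_contra hcon
    have hc1 : c = 1 := by omega
    subst hc1
    have a0 : (l₀ : ℕ) < 1 := by simpa using l₀.isLt
    have a1 : (l₁ : ℕ) < 1 := by simpa using l₁.isLt
    exact hll (Fin.ext (by omega))
  obtain ⟨hm2, hk2, hq⟩ := arith_facts2 c hc2
  have step1 : ∑ M ∈ univ.filter (fun M : Fin (c^2) × Fin 4 → Bool =>
        M (l₀, i₀) = b ∧ M (l₁, i₁) = b'), nuC c M
      = ∑ M : Fin (c^2) × Fin 4 → Bool,
          nuC c M * ∏ l, (if l = l₀ then (if M (l, i₀) = b then (1:ℝ) else 0)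
            else if l = l₁ then (if M (l, i₁) = b' then (1:ℝ) else 0) else 1) := by
    rw [Finset.sum_filter]
    apply Finset.sum_congr rfl
    intro M _
    have hl₁mem : l₁ ∈ univ.erase l₀ := mem_erase.2 ⟨hll.symm, mem_univ l₁⟩
    have hp : (∏ l, (if l = l₀ then (if M (l, i₀) = b then (1:ℝ) else 0)
          else if l = l₁ then (if M (l, i₁) = b' then (1:ℝ) else 0) else 1))
        = (if M (l₀, i₀) = b then (1:ℝ) else 0) * (if M (l₁, i₁) = b' then (1:ℝ) else 0) := by
      rw [← Finset.mul_prod_erase univ _ (mem_univ l₀), ← Finset.mul_prod_erase _ _ hl₁mem]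
      have hrest : (∏ l ∈ (univ.erase l₀).erase l₁,
          (if l = l₀ then (if M (l, i₀) = b then (1:ℝ) else 0)
            else if l = l₁ then (if M (l, i₁) = b' then (1:ℝ) else 0) else 1)) = 1 := by
        apply Finset.prod_eq_one
        intro l hl
        have hne1 := (Finset.mem_erase.1 hl).1
        have hne0 := (Finset.mem_erase.1 (Finset.mem_erase.1 hl).2).1
        simp [hne0, hne1]
      rw [hrest]
      have h0 : (if l₀ = l₀ then (if M (l₀, i₀) = b then (1:ℝ) else 0)
          else if l₀ = l₁ then (if M (l₀, i₁) = b' then (1:ℝ) else 0) else 1)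
          = (if M (l₀, i₀) = b then (1:ℝ) else 0) := by simp
      have h1 : (if l₁ = l₀ then (if M (l₁, i₀) = b then (1:ℝ) else 0)
          else if l₁ = l₁ then (if M (l₁, i₁) = b' then (1:ℝ) else 0) else 1)
          = (if M (l₁, i₁) = b' then (1:ℝ) else 0) := by simp [hll.symm]
      rw [h0, h1, mul_one]
    rw [hp]
    by_cases h : M (l₀, i₀) = b ∧ M (l₁, i₁) = b'
    · simp [h.1, h.2]
    · rw [not_and_or] at h
      rcases h with h | h <;> simp [h]
  have hu₀ : (∑ r ∈ univ.filter (fun r => rSum r = (2:ℤ)), (if r i₀ = b then (1:ℝ) else 0))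
      + (∑ r ∈ univ.filter (fun r => rSum r = (-2:ℤ)), (if r i₀ = b then (1:ℝ) else 0)) = 4 := by
    rw [Finset.sum_boole, Finset.sum_boole, Finset.filter_filter, Finset.filter_filter]
    exact_mod_cast count_one i₀ b
  have hu₁ : (∑ r ∈ univ.filter (fun r => rSum r = (2:ℤ)), (if r i₁ = b' then (1:ℝ) else 0))
      + (∑ r ∈ univ.filter (fun r => rSum r = (-2:ℤ)), (if r i₁ = b' then (1:ℝ) else 0)) = 4 := by
    rw [Finset.sum_boole, Finset.sum_boole, Finset.filter_filter, Finset.filter_filter]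
    exact_mod_cast count_one i₁ b'
  have hCNnat := pascal1'' (c^2) (c*(c-1)/2 + c) (c^2-2) (c*(c-1)/2 + (c-2)) hm2 hk2
  have hCN : ((Nat.choose (c^2) (c*(c-1)/2 + c) : ℕ) : ℝ)
      = (Nat.choose (c^2-2) (c*(c-1)/2 + (c-2)) : ℝ)
        + 2 * (Nat.choose (c^2-2) ((c*(c-1)/2 + (c-2))+1) : ℝ)
        + (Nat.choose (c^2-2) ((c*(c-1)/2 + (c-2))+2) : ℝ) := by
    exact_mod_cast congrArg (Nat.cast (R := ℝ)) hCNnat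
  have hADnat : Nat.choose (c^2-2) (c*(c-1)/2 + (c-2))
        + Nat.choose (c^2-2) ((c*(c-1)/2 + (c-2))+2)
      = 2 * Nat.choose (c^2-2) ((c*(c-1)/2 + (c-2))+1) := by
    have e1 : (c-2)+2 = c := by omega
    have e2 : (c-2)+1 = c-1 := by omega
    have h2H : 2*(c*(c-1)/2) = ((c-2)+2)*((c-2)+1) := by
      rw [e1, e2]; exact two_mul_div c
    have hp2 := pascal2 (c-2) (c*(c-1)/2) h2H
    rw [← hq] at hp2
    exact hp2
  have hAD : (Nat.choose (c^2-2) (c*(c-1)/2 + (c-2)) : ℝ)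
        + (Nat.choose (c^2-2) ((c*(c-1)/2 + (c-2))+2) : ℝ)
      = 2 * (Nat.choose (c^2-2) ((c*(c-1)/2 + (c-2))+1) : ℝ) := by
    exact_mod_cast congrArg (Nat.cast (R := ℝ)) hADnat
  calc ∑ M ∈ univ.filter (fun M : Fin (c^2) × Fin 4 → Bool =>
        M (l₀, i₀) = b ∧ M (l₁, i₁) = b'), nuC c M
      = ∑ M : Fin (c^2) × Fin 4 → Bool,
          nuC c M * ∏ l, (if l = l₀ then (if M (l, i₀) = b then (1:ℝ) else 0)
            else if l = l₁ then (if M (l, i₁) = b' then (1:ℝ) else 0) else 1) := step1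
    _ = ((1/2) * (1 / ((Nat.choose (c^2) (c*(c-1)/2 + c) : ℕ) : ℝ)) * (1/4)^(c^2)) *
        ((∑ S ∈ powersetCard (c*(c-1)/2 + c) (univ : Finset (Fin (c^2))),
            ∏ l, ∑ r ∈ univ.filter (fun r => rSum r = (if l ∈ S then (2:ℤ) else -2)),
              (if l = l₀ then (if r i₀ = b then (1:ℝ) else 0)
                else if l = l₁ then (if r i₁ = b' then (1:ℝ) else 0) else 1))
         + (∑ S ∈ powersetCard (c*(c-1)/2 + c) (univ : Finset (Fin (c^2))),
            ∏ l, ∑ r ∈ univ.filter (fun r => rSum r = (if l ∈ S then (-2:ℤ) else 2)),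
              (if l = l₀ then (if r i₀ = b then (1:ℝ) else 0)
                else if l = l₁ then (if r i₁ = b' then (1:ℝ) else 0) else 1))) :=
        nu_sum c (fun l r => if l = l₀ then (if r i₀ = b then (1:ℝ) else 0)
          else if l = l₁ then (if r i₁ = b' then (1:ℝ) else 0) else 1)
    _ = ((1/2) * (1 / ((Nat.choose (c^2) (c*(c-1)/2 + c) : ℕ) : ℝ)) * (1/4)^(c^2)) *
        ((4:ℝ)^(c^2-2) *
          ((Nat.choose (c^2-2) (c*(c-1)/2 + (c-2)) : ℝ)
            * ((∑ r ∈ univ.filter (fun r => rSum r = (2:ℤ)), (if r i₀ = b then (1:ℝ) else 0))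
              * (∑ r ∈ univ.filter (fun r => rSum r = (2:ℤ)), (if r i₁ = b' then (1:ℝ) else 0)))
          + (Nat.choose (c^2-2) ((c*(c-1)/2 + (c-2))+1) : ℝ)
            * ((∑ r ∈ univ.filter (fun r => rSum r = (2:ℤ)), (if r i₀ = b then (1:ℝ) else 0))
              * (∑ r ∈ univ.filter (fun r => rSum r = (-2:ℤ)), (if r i₁ = b' then (1:ℝ) else 0))
              + (∑ r ∈ univ.filter (fun r => rSum r = (-2:ℤ)), (if r i₀ = b then (1:ℝ) else 0))
              * (∑ r ∈ univ.filter (fun r => rSum r = (2:ℤ)), (if r i₁ = b' then (1:ℝ) else 0)))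
          + (Nat.choose (c^2-2) ((c*(c-1)/2 + (c-2))+2) : ℝ)
            * ((∑ r ∈ univ.filter (fun r => rSum r = (-2:ℤ)), (if r i₀ = b then (1:ℝ) else 0))
              * (∑ r ∈ univ.filter (fun r => rSum r = (-2:ℤ)), (if r i₁ = b' then (1:ℝ) else 0))))
         + (4:ℝ)^(c^2-2) *
          ((Nat.choose (c^2-2) (c*(c-1)/2 + (c-2)) : ℝ)
            * ((∑ r ∈ univ.filter (fun r => rSum r = (-2:ℤ)), (if r i₀ = b then (1:ℝ) else 0))
              * (∑ r ∈ univ.filter (fun r => rSum r = (-2:ℤ)), (if r i₁ = b' then (1:ℝ) else 0)))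
          + (Nat.choose (c^2-2) ((c*(c-1)/2 + (c-2))+1) : ℝ)
            * ((∑ r ∈ univ.filter (fun r => rSum r = (-2:ℤ)), (if r i₀ = b then (1:ℝ) else 0))
              * (∑ r ∈ univ.filter (fun r => rSum r = (2:ℤ)), (if r i₁ = b' then (1:ℝ) else 0))
              + (∑ r ∈ univ.filter (fun r => rSum r = (2:ℤ)), (if r i₀ = b then (1:ℝ) else 0))
              * (∑ r ∈ univ.filter (fun r => rSum r = (-2:ℤ)), (if r i₁ = b' then (1:ℝ) else 0)))
          + (Nat.choose (c^2-2) ((c*(c-1)/2 + (c-2))+2) : ℝ)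
            * ((∑ r ∈ univ.filter (fun r => rSum r = (2:ℤ)), (if r i₀ = b then (1:ℝ) else 0))
              * (∑ r ∈ univ.filter (fun r => rSum r = (2:ℤ)), (if r i₁ = b' then (1:ℝ) else 0))))) := by
        rw [branch_two (c*(c-1)/2 + c) (c*(c-1)/2 + (c-2)) hk2 2 (-2) count_all2 count_allm2
            l₀ l₁ hll (fun r => if r i₀ = b then (1:ℝ) else 0)
            (fun r => if r i₁ = b' then (1:ℝ) else 0),
          branch_two (c*(c-1)/2 + c) (c*(c-1)/2 + (c-2)) hk2 (-2) 2 count_allm2 count_all2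
            l₀ l₁ hll (fun r => if r i₀ = b then (1:ℝ) else 0)
            (fun r => if r i₁ = b' then (1:ℝ) else 0)]
    _ = 1/4 :=
        final_calc2 (c^2) (c^2-2) hm2 _ _ _ _ _ _ _ _ hCN hAD hpos hu₀ hu₁

lemma L2 (c : ℕ) (hc : 1 ≤ c) (p q : Fin (c^2) × Fin 4) (hpq : p ≠ q) (b b' : Bool) :
    ∑ M ∈ univ.filter (fun M : Fin (c^2) × Fin 4 → Bool => M p = b ∧ M q = b'), nuC c M
      = 1/4 := by
  obtain ⟨l₀, i₀⟩ := p
  obtain ⟨l₁, i₁⟩ := q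
  by_cases hl : l₀ = l₁
  · subst hl
    have hii : i₀ ≠ i₁ := fun h => hpq (by rw [h])
    exact L2same c hc l₀ i₀ i₁ hii b b'
  · exact L2diff c hc l₀ l₁ hl i₀ i₁ b b'

/-- ν_c is pairwise uniform on its 4c² bits. -/
theorem stmt17 (c : ℕ) (hc : 1 ≤ c) :
    kwiseUniform 2 (nuC c) ∧
    -- every single entry is uniform on ±1
    (∀ p : Fin (c ^ 2) × Fin 4,
      ∑ M ∈ Finset.univ.filter (fun M : Fin (c ^ 2) × Fin 4 → Bool => M p = true),
        nuC c M = 1 / 2) ∧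
    -- every pair of distinct entries has expected product 0
    (∀ p q : Fin (c ^ 2) × Fin 4, p ≠ q →
      ∑ M : Fin (c ^ 2) × Fin 4 → Bool, nuC c M * sgn (M p) * sgn (M q) = 0) := by
  have part2 : ∀ (p : Fin (c ^ 2) × Fin 4) (b : Bool),
      ∑ M ∈ Finset.univ.filter (fun M : Fin (c ^ 2) × Fin 4 → Bool => M p = b),
        nuC c M = 1 / 2 := by
    intro p b
    obtain ⟨l₀, i₀⟩ := p
    exact L1 c hc l₀ i₀ b
  refine ⟨?_, fun p => part2 p true, ?_⟩
  · -- kwiseUniform 2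
    intro A hA a
    have hcases : A.card = 0 ∨ A.card = 1 ∨ A.card = 2 := by omega
    rcases hcases with h0 | h1 | h2
    · rw [Finset.card_eq_zero] at h0
      subst h0
      rw [Finset.filter_true_of_mem (by simp)]
      simpa using L0 c hc
    · obtain ⟨p, rfl⟩ := Finset.card_eq_one.1 h1
      have hfil : (Finset.univ.filter
            (fun x : Fin (c ^ 2) × Fin 4 → Bool => ∀ i ∈ ({p} : Finset _), x i = a i))
          = Finset.univ.filter (fun x : Fin (c ^ 2) × Fin 4 → Bool => x p = a p) := by
        ext x; simp
      rw [hfil, Finset.card_singleton, pow_one]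
      exact part2 p (a p)
    · obtain ⟨p, q, hpq, rfl⟩ := Finset.card_eq_two.1 h2
      have hfil : (Finset.univ.filter
            (fun x : Fin (c ^ 2) × Fin 4 → Bool => ∀ i ∈ ({p, q} : Finset _), x i = a i))
          = Finset.univ.filter
            (fun x : Fin (c ^ 2) × Fin 4 → Bool => x p = a p ∧ x q = a q) := by
        ext x; simp
      rw [hfil, Finset.card_insert_of_notMem (by simp [hpq]), Finset.card_singleton]
      rw [L2 c hc p q hpq (a p) (a q)]
      norm_num
  · -- part 3
    intro p q hpq
    have key : ∀ (u v : Bool),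
        ∑ M ∈ Finset.univ.filter
            (fun M : Fin (c ^ 2) × Fin 4 → Bool => M p = u ∧ M q = v),
          nuC c M * sgn (M p) * sgn (M q)
        = (1/4 : ℝ) * sgn u * sgn v := by
      intro u v
      have : ∀ M ∈ Finset.univ.filter
            (fun M : Fin (c ^ 2) × Fin 4 → Bool => M p = u ∧ M q = v),
          nuC c M * sgn (M p) * sgn (M q) = nuC c M * sgn u * sgn v := by
        intro M hM
        rw [Finset.mem_filter] at hM
        rw [hM.2.1, hM.2.2]
      rw [Finset.sum_congr rfl this]
      have : (∑ M ∈ Finset.univ.filter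
            (fun M : Fin (c ^ 2) × Fin 4 → Bool => M p = u ∧ M q = v),
          nuC c M * sgn u * sgn v)
          = (∑ M ∈ Finset.univ.filter
            (fun M : Fin (c ^ 2) × Fin 4 → Bool => M p = u ∧ M q = v),
          nuC c M) * sgn u * sgn v := by
        rw [Finset.sum_mul, Finset.sum_mul]
      rw [this, L2 c hc p q hpq u v]
    have hfib := Finset.sum_fiberwise (Finset.univ : Finset (Fin (c ^ 2) × Fin 4 → Bool))
      (fun M => (M p, M q)) (fun M => nuC c M * sgn (M p) * sgn (M q))
    rw [← hfib]
    have hb : ∀ b : Bool × Bool,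
        (∑ M ∈ Finset.univ.filter
            (fun M : Fin (c ^ 2) × Fin 4 → Bool => (M p, M q) = b),
          nuC c M * sgn (M p) * sgn (M q))
        = (1/4 : ℝ) * sgn b.1 * sgn b.2 := by
      intro b
      have hfil : (Finset.univ.filter
            (fun M : Fin (c ^ 2) × Fin 4 → Bool => (M p, M q) = b))
          = Finset.univ.filter
            (fun M : Fin (c ^ 2) × Fin 4 → Bool => M p = b.1 ∧ M q = b.2) := by
        ext M; simp [Prod.ext_iff]
      rw [hfil]
      exact key b.1 b.2
    rw [Finset.sum_congr rfl (fun b _ => hb b)]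
    rw [Fintype.sum_prod_type]
    simp [sgn]
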